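/- arXiv:2307.05982 — 4 statements merged into one kernel-verified Lean document; each statement's English description precedes it below -/
import Mathlib

section
/- Let f : ℝ → ℝ be C¹ and A > 0 satisfy A = ∫_{-π}^{π} cos(y) f(A cos(y)) dy. Define L₀ψ = -ψ + ∫_{-π}^{π} cos(·-y) f'(A cos y) ψ(y) dy and γ = ∫_{-π}^{π} f'(A cos(x)) dx - 2. Then u₀(x) = A cos(x) satisfies L₀ u₀ = γ u₀, i.e. cos is an eigenfunction of L₀ with eigenvalue γ. -/
open Real MeasureTheory

theorem stmt_8 (f : ℝ → ℝ) (hf : ContDiff ℝ 1 f) (A : ℝ) (hA : 0 < A)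
    (hfix : A = ∫ y in (-π)..π, Real.cos y * f (A * Real.cos y)) :
    ∀ x : ℝ,
      -(A * Real.cos x) +
          (∫ y in (-π)..π, Real.cos (x - y) * deriv f (A * Real.cos y) * (A * Real.cos y)) =
        ((∫ y in (-π)..π, deriv f (A * Real.cos y)) - 2) * (A * Real.cos x) := by
  intro x
  have hc : Continuous (deriv f) := (hf.continuous_deriv le_rfl)
  have hcf : Continuous f := hf.continuous
  -- continuity helpers
  have hcont : Continuous fun y : ℝ => deriv f (A * Real.cos y) :=
    hc.comp (continuous_const.mul Real.continuous_cos)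
  -- integration by parts: ∫ cos y * f(A cos y) = ∫ A * sin y ^ 2 * deriv f (A cos y)
  have hparts : (∫ y in (-π)..π, Real.cos y * f (A * Real.cos y))
      = ∫ y in (-π)..π, A * Real.sin y ^ 2 * deriv f (A * Real.cos y) := by
    have hderiv : ∀ y ∈ Set.uIcc (-π) π, HasDerivAt (fun y => Real.sin y * f (A * Real.cos y))
        (Real.cos y * f (A * Real.cos y) - A * Real.sin y ^ 2 * deriv f (A * Real.cos y)) y := by
      intro y _
      have h1 : HasDerivAt Real.sin (Real.cos y) y := Real.hasDerivAt_sin y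
      have h2 : HasDerivAt (fun y => A * Real.cos y) (A * (-Real.sin y)) y :=
        (Real.hasDerivAt_cos y).const_mul A
      have h3 : HasDerivAt f (deriv f (A * Real.cos y)) (A * Real.cos y) :=
        (hf.differentiable one_ne_zero (A * Real.cos y)).hasDerivAt
      have h4 : HasDerivAt (fun y => Real.sin y * (f ∘ fun y => A * Real.cos y) y)
          (Real.cos y * f (A * Real.cos y) + Real.sin y * (deriv f (A * Real.cos y) * (A * -Real.sin y))) y :=
        h1.mul (h3.comp y h2)
      simp only [Function.comp] at h4
      convert h4 using 1
      ring
    have h0 := intervalIntegral.integral_eq_sub_of_hasDerivAt hderiv ?_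
    · have hz : Real.sin π * f (A * Real.cos π) - Real.sin (-π) * f (A * Real.cos (-π)) = 0 := by
        simp [Real.sin_pi]
      rw [hz] at h0
      have hsplit : (∫ y in (-π)..π, (Real.cos y * f (A * Real.cos y)
          - A * Real.sin y ^ 2 * deriv f (A * Real.cos y)))
          = (∫ y in (-π)..π, Real.cos y * f (A * Real.cos y))
            - ∫ y in (-π)..π, A * Real.sin y ^ 2 * deriv f (A * Real.cos y) := by
        apply intervalIntegral.integral_sub
        · exact (Real.continuous_cos.mul (hcf.comp (continuous_const.mul Real.continuous_cos))).intervalIntegrable _ _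
        · exact ((continuous_const.mul (Real.continuous_sin.pow 2)).mul hcont).intervalIntegrable _ _
      rw [hsplit] at h0
      linarith
    · exact ((Real.continuous_cos.mul (hcf.comp (continuous_const.mul Real.continuous_cos))).sub
        ((continuous_const.mul (Real.continuous_sin.pow 2)).mul hcont)).intervalIntegrable _ _
  -- odd integral vanishes
  have hodd : (∫ y in (-π)..π, Real.sin y * deriv f (A * Real.cos y) * (A * Real.cos y)) = 0 := by
    set g : ℝ → ℝ := fun y => Real.sin y * deriv f (A * Real.cos y) * (A * Real.cos y) with hg
    have h1 : (∫ y in (-π)..π, g (-y)) = ∫ y in (-(π:ℝ))..(- -π), g y :=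
      intervalIntegral.integral_comp_neg g
    have h2 : ∀ y, g (-y) = -g y := by
      intro y; simp [hg, Real.sin_neg, Real.cos_neg]
    simp only [h2, neg_neg] at h1
    rw [intervalIntegral.integral_neg] at h1
    linarith
  -- expand cos (x - y) and split the main integral
  have hmain : (∫ y in (-π)..π, Real.cos (x - y) * deriv f (A * Real.cos y) * (A * Real.cos y))
      = Real.cos x * (∫ y in (-π)..π, Real.cos y * deriv f (A * Real.cos y) * (A * Real.cos y))
        + Real.sin x * (∫ y in (-π)..π, Real.sin y * deriv f (A * Real.cos y) * (A * Real.cos y)) := by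
    rw [← intervalIntegral.integral_const_mul, ← intervalIntegral.integral_const_mul,
      ← intervalIntegral.integral_add]
    · apply intervalIntegral.integral_congr
      intro y _
      simp only [Real.cos_sub]
      ring
    · exact (continuous_const.mul ((Real.continuous_cos.mul hcont).mul
        (continuous_const.mul Real.continuous_cos))).intervalIntegrable _ _
    · exact (continuous_const.mul ((Real.continuous_sin.mul hcont).mul
        (continuous_const.mul Real.continuous_cos))).intervalIntegrable _ _
  -- J1 = A * I - A
  have hJ1 : (∫ y in (-π)..π, Real.cos y * deriv f (A * Real.cos y) * (A * Real.cos y))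
      = A * (∫ y in (-π)..π, deriv f (A * Real.cos y)) - A := by
    have hid : ∀ y : ℝ, Real.cos y * deriv f (A * Real.cos y) * (A * Real.cos y)
        = A * deriv f (A * Real.cos y) - A * Real.sin y ^ 2 * deriv f (A * Real.cos y) := by
      intro y
      linear_combination (A * deriv f (A * Real.cos y)) * (Real.sin_sq_add_cos_sq y)
    have : (∫ y in (-π)..π, Real.cos y * deriv f (A * Real.cos y) * (A * Real.cos y))
        = ∫ y in (-π)..π, (A * deriv f (A * Real.cos y)
            - A * Real.sin y ^ 2 * deriv f (A * Real.cos y)) := by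
      apply intervalIntegral.integral_congr
      intro y _; exact hid y
    rw [this, intervalIntegral.integral_sub, intervalIntegral.integral_const_mul,
      ← hparts, ← hfix]
    · exact (continuous_const.mul hcont).intervalIntegrable _ _
    · exact ((continuous_const.mul (Real.continuous_sin.pow 2)).mul hcont).intervalIntegrable _ _
  rw [hmain, hodd, hJ1]
  ring
end

section
/- Let f : ℝ → ℝ be C¹, A > 0 with A = ∫_{-π}^{π} cos(y) f(A cos(y)) dy, and L₀ ψ = -ψ + ∫_{-π}^{π} cos(·-y) f'(A cos y) ψ(y) dy. If ψ ∈ L²([-π,π]) satisfies ∫_{-π}^{π} cos(y) f'(A cos y) ψ(y) dy = 0 and ∫_{-π}^{π} sin(y) f'(A cos y) ψ(y) dy = 0, then L₀ ψ = -ψ. Consequently the spectrum of L₀ consists exactly of the eigenvalues -1, 0 and γ = ∫ f'(A cos) - 2 (when these are distinct), with eigenspaces for 0 and γ spanned respectively by sin and cos. -/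
open Real MeasureTheory


lemma odd_int_zero (h : ℝ → ℝ) (hodd : ∀ x, h (-x) = - h x) (a : ℝ) :
    ∫ x in (-a)..a, h x = 0 := by
  have h1 : ∫ x in (-a)..a, h (-x) = ∫ x in (-a)..a, h x := by
    rw [intervalIntegral.integral_comp_neg]; simp
  have h2 : ∫ x in (-a)..a, h (-x) = -∫ x in (-a)..a, h x := by
    simp_rw [hodd]; rw [intervalIntegral.integral_neg]
  linarith [h1, h2]

theorem stmt_9 (f : ℝ → ℝ) (hf : ContDiff ℝ 1 f) (A : ℝ) (hA : 0 < A)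
    (hfix : A = ∫ y in (-π)..π, Real.cos y * f (A * Real.cos y)) :
    -- if ψ is orthogonal (with weight f'(A cos)) to cos and sin, then L₀ ψ = -ψ
    (∀ ψ : ℝ → ℝ, Continuous ψ →
      (∫ y in (-π)..π, Real.cos y * deriv f (A * Real.cos y) * ψ y) = 0 →
      (∫ y in (-π)..π, Real.sin y * deriv f (A * Real.cos y) * ψ y) = 0 →
      ∀ x : ℝ,
        -ψ x + (∫ y in (-π)..π, Real.cos (x - y) * deriv f (A * Real.cos y) * ψ y) =
          -ψ x) ∧
    -- the only eigenvalues of L₀ are -1, 0 and γ = I(1) - 2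
    (∀ (lam : ℝ) (ψ : ℝ → ℝ), Continuous ψ → (∃ x, ψ x ≠ 0) →
      (∀ x : ℝ,
        -ψ x + (∫ y in (-π)..π, Real.cos (x - y) * deriv f (A * Real.cos y) * ψ y) =
          lam * ψ x) →
      lam = -1 ∨ lam = 0 ∨ lam = (∫ y in (-π)..π, deriv f (A * Real.cos y)) - 2) ∧
    -- the eigenspace for 0 is spanned by sin
    (((∫ y in (-π)..π, deriv f (A * Real.cos y)) - 2) ≠ 0 →
      ∀ ψ : ℝ → ℝ, Continuous ψ →
      (∀ x : ℝ,
        -ψ x + (∫ y in (-π)..π, Real.cos (x - y) * deriv f (A * Real.cos y) * ψ y) =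
          0 * ψ x) →
      ∃ c : ℝ, ∀ x : ℝ, ψ x = c * Real.sin x) ∧
    -- the eigenspace for γ is spanned by cos
    (((∫ y in (-π)..π, deriv f (A * Real.cos y)) - 2) ≠ 0 →
      ((∫ y in (-π)..π, deriv f (A * Real.cos y)) - 2) ≠ -1 →
      ∀ ψ : ℝ → ℝ, Continuous ψ →
      (∀ x : ℝ,
        -ψ x + (∫ y in (-π)..π, Real.cos (x - y) * deriv f (A * Real.cos y) * ψ y) =
          ((∫ y in (-π)..π, deriv f (A * Real.cos y)) - 2) * ψ x) →
      ∃ c : ℝ, ∀ x : ℝ, ψ x = c * Real.cos x) := by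
  set g : ℝ → ℝ := fun y => deriv f (A * Real.cos y) with hg
  have hgc : Continuous g := by
    exact (hf.continuous_deriv le_rfl).comp (continuous_const.mul Real.continuous_cos)
  set I : ℝ := ∫ y in (-π)..π, g y with hI
  -- decomposition of the convolution integral
  have hdecomp : ∀ ψ : ℝ → ℝ, Continuous ψ → ∀ x,
      (∫ y in (-π)..π, Real.cos (x - y) * g y * ψ y)
        = Real.cos x * (∫ y in (-π)..π, Real.cos y * g y * ψ y)
          + Real.sin x * (∫ y in (-π)..π, Real.sin y * g y * ψ y) := by
    intro ψ hψ x
    have h1 : ∀ y, Real.cos (x - y) * g y * ψ y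
        = Real.cos x * (Real.cos y * g y * ψ y) + Real.sin x * (Real.sin y * g y * ψ y) := by
      intro y; rw [Real.cos_sub]; ring
    simp_rw [h1]
    rw [intervalIntegral.integral_add (f := fun y => Real.cos x * (Real.cos y * g y * ψ y))
        (g := fun y => Real.sin x * (Real.sin y * g y * ψ y))
        ((continuous_const.mul ((Real.continuous_cos.mul hgc).mul hψ)).intervalIntegrable _ _)
        ((continuous_const.mul ((Real.continuous_sin.mul hgc).mul hψ)).intervalIntegrable _ _),
      intervalIntegral.integral_const_mul, intervalIntegral.integral_const_mul]
  -- key integral: ∫ sin² g = 1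
  have hS : (∫ y in (-π)..π, Real.sin y * Real.sin y * g y) = 1 := by
    have hd : ∀ y ∈ Set.uIcc (-π) π,
        HasDerivAt (fun y => Real.sin y * f (A * Real.cos y))
          (Real.cos y * f (A * Real.cos y)
            + Real.sin y * (deriv f (A * Real.cos y) * (A * (-Real.sin y)))) y := by
      intro y _
      have h1 : HasDerivAt (fun y : ℝ => A * Real.cos y) (A * (-Real.sin y)) y :=
        (Real.hasDerivAt_cos y).const_mul A
      have h2 : HasDerivAt f (deriv f (A * Real.cos y)) (A * Real.cos y) :=
        (hf.differentiable one_ne_zero _).hasDerivAt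
      exact (Real.hasDerivAt_sin y).mul (h2.comp y h1)
    have i1 : IntervalIntegrable (fun y => Real.cos y * f (A * Real.cos y)) volume (-π) π := by
      apply Continuous.intervalIntegrable
      exact Real.continuous_cos.mul (hf.continuous.comp (continuous_const.mul Real.continuous_cos))
    have i2 : IntervalIntegrable
        (fun y => Real.sin y * (deriv f (A * Real.cos y) * (A * (-Real.sin y)))) volume (-π) π := by
      apply Continuous.intervalIntegrable
      exact Real.continuous_sin.mul (hgc.mul (continuous_const.mul Real.continuous_sin.neg))
    have heq := intervalIntegral.integral_eq_sub_of_hasDerivAt hd (i1.add i2)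
    rw [intervalIntegral.integral_add i1 i2] at heq
    have hz : Real.sin π * f (A * Real.cos π) - Real.sin (-π) * f (A * Real.cos (-π)) = 0 := by
      simp
    rw [hz] at heq
    have h2 : (∫ y in (-π)..π, Real.sin y * (deriv f (A * Real.cos y) * (A * (-Real.sin y))))
        = -A * ∫ y in (-π)..π, Real.sin y * Real.sin y * g y := by
      have hpt : ∀ y, Real.sin y * (deriv f (A * Real.cos y) * (A * (-Real.sin y)))
          = -A * (Real.sin y * Real.sin y * g y) := by intro y; simp only [hg]; ring
      simp_rw [hpt]
      rw [intervalIntegral.integral_const_mul]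
    rw [h2, ← hfix] at heq
    have hAne : A ≠ 0 := ne_of_gt hA
    have h3 : A * (∫ y in (-π)..π, Real.sin y * Real.sin y * g y) = A * 1 := by
      have := heq; nlinarith [heq]
    exact mul_left_cancel₀ hAne h3
  -- odd integrals
  have hM : (∫ y in (-π)..π, Real.sin y * Real.cos y * g y) = 0 := by
    apply odd_int_zero
    intro x
    simp only [hg, Real.sin_neg, Real.cos_neg]
    ring
  have hM2 : (∫ y in (-π)..π, Real.cos y * Real.sin y * g y) = 0 := by
    apply odd_int_zero
    intro x
    simp only [hg, Real.sin_neg, Real.cos_neg]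
    ring
  -- ∫ cos² g = I - 1
  have hC : (∫ y in (-π)..π, Real.cos y * Real.cos y * g y) = I - 1 := by
    have h1 : ∀ y, Real.cos y * Real.cos y * g y = g y - Real.sin y * Real.sin y * g y := by
      intro y
      linear_combination g y * Real.sin_sq_add_cos_sq y
    simp_rw [h1]
    rw [intervalIntegral.integral_sub (f := g) (g := fun y => Real.sin y * Real.sin y * g y)
        (hgc.intervalIntegrable _ _)
        (((Real.continuous_sin.mul Real.continuous_sin).mul hgc).intervalIntegrable _ _), hS]
  -- the main eigen-computation
  have key : ∀ (lam : ℝ) (ψ : ℝ → ℝ), Continuous ψ →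
      (∀ x, -ψ x + (∫ y in (-π)..π, Real.cos (x - y) * g y * ψ y) = lam * ψ x) →
      ((lam + 1) * (∫ y in (-π)..π, Real.cos y * g y * ψ y)
          = (I - 1) * (∫ y in (-π)..π, Real.cos y * g y * ψ y)) ∧
      ((lam + 1) * (∫ y in (-π)..π, Real.sin y * g y * ψ y)
          = (∫ y in (-π)..π, Real.sin y * g y * ψ y)) ∧
      (∀ x, (lam + 1) * ψ x
          = (∫ y in (-π)..π, Real.cos y * g y * ψ y) * Real.cos x
            + (∫ y in (-π)..π, Real.sin y * g y * ψ y) * Real.sin x) := by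
    intro lam ψ hψ heq
    set a : ℝ := ∫ y in (-π)..π, Real.cos y * g y * ψ y with ha
    set b : ℝ := ∫ y in (-π)..π, Real.sin y * g y * ψ y with hb
    have hpsi : ∀ x, (lam + 1) * ψ x = a * Real.cos x + b * Real.sin x := by
      intro x
      have h := heq x
      rw [hdecomp ψ hψ x] at h
      linarith [h]
    have step : ∀ (w : ℝ → ℝ), Continuous w →
        (lam + 1) * (∫ y in (-π)..π, w y * g y * ψ y)
          = a * (∫ y in (-π)..π, w y * Real.cos y * g y)
            + b * (∫ y in (-π)..π, w y * Real.sin y * g y) := by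
      intro w hw
      have l1 : (lam + 1) * (∫ y in (-π)..π, w y * g y * ψ y)
          = ∫ y in (-π)..π, w y * g y * ((lam + 1) * ψ y) := by
        rw [← intervalIntegral.integral_const_mul]
        congr 1; ext y; ring
      rw [l1]
      have l2 : ∀ y, w y * g y * ((lam + 1) * ψ y)
          = a * (w y * Real.cos y * g y) + b * (w y * Real.sin y * g y) := by
        intro y; rw [hpsi y]; ring
      simp_rw [l2]
      rw [intervalIntegral.integral_add (f := fun y => a * (w y * Real.cos y * g y))
          (g := fun y => b * (w y * Real.sin y * g y))
          ((continuous_const.mul ((hw.mul Real.continuous_cos).mul hgc)).intervalIntegrable _ _)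
          ((continuous_const.mul ((hw.mul Real.continuous_sin).mul hgc)).intervalIntegrable _ _),
        intervalIntegral.integral_const_mul, intervalIntegral.integral_const_mul]
    have sa := step Real.cos Real.continuous_cos
    have sb := step Real.sin Real.continuous_sin
    rw [← ha, hC, hM2] at sa
    rw [← hb, hM, hS] at sb
    exact ⟨by linarith [sa], by linarith [sb], hpsi⟩
  refine ⟨?_, ?_, ?_, ?_⟩
  · -- part 1
    intro ψ hψ hc hs x
    rw [hdecomp ψ hψ x, hc, hs]
    ring
  · -- part 2
    intro lam ψ hψ hex heq
    obtain ⟨x0, hx0⟩ := hex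
    obtain ⟨ka, kb, kpsi⟩ := key lam ψ hψ heq
    by_contra hcon
    push_neg at hcon
    obtain ⟨h1, h2, h3⟩ := hcon
    have hb0 : (∫ y in (-π)..π, Real.sin y * g y * ψ y) = 0 := by
      have hlb : lam * (∫ y in (-π)..π, Real.sin y * g y * ψ y) = 0 := by linarith [kb]
      rcases mul_eq_zero.mp hlb with h | h
      · exact absurd h h2
      · exact h
    have ha0 : (∫ y in (-π)..π, Real.cos y * g y * ψ y) = 0 := by
      by_contra ha'
      have hl : lam + 1 = I - 1 := mul_right_cancel₀ ha' ka
      exact h3 (by linarith)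
    have hz : (lam + 1) * ψ x0 = 0 := by
      rw [kpsi x0, ha0, hb0]; ring
    rcases mul_eq_zero.mp hz with h | h
    · exact h1 (by linarith)
    · exact hx0 h
  · -- part 3: lam = 0
    intro hγ ψ hψ heq
    obtain ⟨ka, kb, kpsi⟩ := key 0 ψ hψ heq
    have ha0 : (∫ y in (-π)..π, Real.cos y * g y * ψ y) = 0 := by
      by_contra ha'
      have hl : (0 : ℝ) + 1 = I - 1 := mul_right_cancel₀ ha' ka
      exact hγ (by linarith)
    refine ⟨∫ y in (-π)..π, Real.sin y * g y * ψ y, fun x => ?_⟩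
    have h := kpsi x
    rw [ha0] at h
    simpa using h
  · -- part 4: lam = γ
    intro hγ hγ1 ψ hψ heq
    obtain ⟨ka, kb, kpsi⟩ := key (I - 2) ψ hψ heq
    have hb0 : (∫ y in (-π)..π, Real.sin y * g y * ψ y) = 0 := by
      have hlb : (I - 2) * (∫ y in (-π)..π, Real.sin y * g y * ψ y) = 0 := by linarith [kb]
      rcases mul_eq_zero.mp hlb with h | h
      · exact absurd h hγ
      · exact h
    have hne : I - 2 + 1 ≠ 0 := fun h => hγ1 (by linarith)
    refine ⟨(∫ y in (-π)..π, Real.cos y * g y * ψ y) / (I - 2 + 1), fun x => ?_⟩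
    have h := kpsi x
    rw [hb0] at h
    field_simp
    linarith [h]
end

section
/- Let A > 0, f : ℝ → ℝ be C¹, u_φ(x) = A cos(x+φ), v_φ(x) = -A sin(x+φ), and suppose A = ∫_{-π}^{π} cos(y) f(A cos y) dy. Then for x_i = 2πi/N - π and B_{N,i} = (x_{i-1}, x_i], Σ_{i=1}^N sin(x_i + φ) ∫_{B_{N,i}} v_φ(y) f'(u_φ(y)) dy = -A + o(1/N) as N → ∞, uniformly in φ. -/
open Real MeasureTheory intervalIntegral

lemma cos_lip (a b : ℝ) : |Real.cos b - Real.cos a| ≤ |b - a| := by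
  rw [Real.cos_sub_cos]
  have h1 : |Real.sin ((b+a)/2)| ≤ 1 := Real.abs_sin_le_one _
  have h2 : |Real.sin ((b-a)/2)| ≤ |(b-a)/2| := Real.abs_sin_le_abs
  calc |(-2) * Real.sin ((b+a)/2) * Real.sin ((b-a)/2)|
      = 2 * (|Real.sin ((b+a)/2)| * |Real.sin ((b-a)/2)|) := by
        rw [abs_mul, abs_mul]; norm_num; ring
    _ ≤ 2 * (1 * |(b-a)/2|) := by
        apply mul_le_mul_of_nonneg_left _ (by norm_num)
        exact mul_le_mul h1 h2 (abs_nonneg _) (by norm_num)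
    _ = |b - a| := by rw [abs_div, abs_two]; ring

lemma sin_taylor {a b : ℝ} (hab : a ≤ b) :
    |Real.sin b - Real.sin a - (b-a) * Real.cos a| ≤ (b-a)^2/2 := by
  have h1 : Real.sin b - Real.sin a - (b-a) * Real.cos a
      = ∫ t in a..b, (Real.cos t - Real.cos a) := by
    rw [intervalIntegral.integral_sub (Real.continuous_cos.intervalIntegrable _ _)
      (intervalIntegrable_const), integral_cos, intervalIntegral.integral_const]
    simp [smul_eq_mul]
  rw [h1]
  calc |∫ t in a..b, (Real.cos t - Real.cos a)|
      ≤ ∫ t in a..b, |Real.cos t - Real.cos a| :=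
        intervalIntegral.abs_integral_le_integral_abs hab
    _ ≤ ∫ t in a..b, (t - a) := by
        apply intervalIntegral.integral_mono_on hab
        · exact (Real.continuous_cos.sub continuous_const).abs.intervalIntegrable _ _
        · exact (continuous_id.sub continuous_const).intervalIntegrable _ _
        · intro t ht
          have := cos_lip a t
          rwa [abs_of_nonneg (by linarith [ht.1] : (0:ℝ) ≤ t - a)] at this
    _ = (b-a)^2/2 := by
        rw [intervalIntegral.integral_sub intervalIntegral.intervalIntegrable_id
          intervalIntegrable_const, integral_id, intervalIntegral.integral_const]
        simp [smul_eq_mul]; ring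

lemma periodic_uc {k : ℝ → ℝ} (hk : Continuous k) (hp : Function.Periodic k (2*π))
    (ε : ℝ) (hε : 0 < ε) :
    ∃ δ > 0, ∀ s t : ℝ, |s - t| ≤ δ → |k s - k t| ≤ ε := by
  have hpi := Real.pi_gt_three
  have huc : UniformContinuousOn k (Set.Icc (-(2*π)) (4*π)) :=
    (isCompact_Icc).uniformContinuousOn_of_continuous hk.continuousOn
  obtain ⟨δ₀, hδ₀, hδ⟩ := (Metric.uniformContinuousOn_iff_le.1 huc) ε hε
  refine ⟨min δ₀ 1, by positivity, fun s t hst => ?_⟩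
  set n : ℤ := ⌊s / (2*π)⌋ with hn
  have h2π : (0:ℝ) < 2*π := by linarith
  have hs' : s - n*(2*π) = 2*π * Int.fract (s/(2*π)) := by
    rw [Int.fract]; field_simp; ring
  have hsmem : s - n*(2*π) ∈ Set.Icc (-(2*π)) (4*π) := by
    rw [hs']
    constructor
    · nlinarith [Int.fract_nonneg (s/(2*π))]
    · nlinarith [(Int.fract_lt_one (s/(2*π))).le]
  have htmem : t - n*(2*π) ∈ Set.Icc (-(2*π)) (4*π) := by
    have h1 : |s - t| ≤ 1 := hst.trans (min_le_right _ _)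
    have := abs_le.1 h1
    rw [hs'] at hsmem
    constructor
    · nlinarith [Int.fract_nonneg (s/(2*π)), hsmem.1, this.1, this.2]
    · nlinarith [(Int.fract_lt_one (s/(2*π))).le, hsmem.2, this.1, this.2]
  have hks : k (s - n*(2*π)) = k s := hp.sub_int_mul_eq n
  have hkt : k (t - n*(2*π)) = k t := hp.sub_int_mul_eq n
  have hd : dist (s - n*(2*π)) (t - n*(2*π)) ≤ δ₀ := by
    rw [Real.dist_eq]
    have : s - n*(2*π) - (t - n*(2*π)) = s - t := by ring
    rw [this]
    exact hst.trans (min_le_left _ _)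
  have := hδ _ hsmem _ htmem hd
  rw [hks, hkt, Real.dist_eq] at this
  exact this

lemma deriv_cont {f : ℝ → ℝ} (hf : ContDiff ℝ 1 f) : Continuous (deriv f) :=
  hf.continuous_deriv le_rfl

lemma hasDeriv_inner {f : ℝ → ℝ} (hf : ContDiff ℝ 1 f) (A φ y : ℝ) :
    HasDerivAt (fun y => f (A * Real.cos (y+φ)))
      (-(A * Real.sin (y+φ)) * deriv f (A * Real.cos (y+φ))) y := by
  have h1 : HasDerivAt (fun y : ℝ => y + φ) 1 y := (hasDerivAt_id y).add_const φ
  have h2 : HasDerivAt (fun y : ℝ => A * Real.cos (y+φ)) (A * (-Real.sin (y+φ) * 1)) y :=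
    (h1.cos).const_mul A
  have h3 : HasDerivAt f (deriv f (A * Real.cos (y+φ))) (A * Real.cos (y+φ)) :=
    (hf.differentiable one_ne_zero _).hasDerivAt
  have : HasDerivAt (fun y => f (A * Real.cos (y+φ))) _ y := h3.comp y h2
  convert this using 1
  ring

lemma integrand_cont {f : ℝ → ℝ} (hf : ContDiff ℝ 1 f) (A φ : ℝ) :
    Continuous (fun y => -(A * Real.sin (y+φ)) * deriv f (A * Real.cos (y+φ))) := by
  have hc := deriv_cont hf
  fun_prop

lemma periodic_G {f : ℝ → ℝ} (A : ℝ) (g : ℝ → ℝ) (hg : ∀ x, g (x + 2*π) = g x) :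
    Function.Periodic g (2*π) := hg

lemma shift_integral {g : ℝ → ℝ} (hg : Continuous g) (hp : Function.Periodic g (2*π)) (φ : ℝ) :
    (∫ y in (-π)..π, g (y + φ)) = ∫ y in (-π)..π, g y := by
  rw [intervalIntegral.integral_comp_add_right]
  have h1 : (∫ y in (-π+φ)..(-π+φ)+2*π, g y) = ∫ y in (-π)..(-π)+2*π, g y :=
    hp.intervalIntegral_add_eq (-π+φ) (-π)
  have e1 : -π + φ + 2*π = π + φ := by ring
  have e2 : -π + 2*π = π := by ring
  rw [e1, e2] at h1
  have e3 : -π + φ = π + φ - 2*π + 0 := by ring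
  convert h1 using 2 <;> ring

lemma odd_integral {g : ℝ → ℝ} (hg : Continuous g) (hodd : ∀ x, g (-x) = -g x) :
    (∫ y in (-π)..π, g y) = 0 := by
  have hsplit : (∫ y in (-π)..(0:ℝ), g y) + (∫ y in (0:ℝ)..π, g y) = ∫ y in (-π)..π, g y :=
    intervalIntegral.integral_add_adjacent_intervals
      (hg.intervalIntegrable _ _) (hg.intervalIntegrable _ _)
  have h1 : (∫ y in (0:ℝ)..π, g (-y)) = ∫ y in (-π)..(0:ℝ), g y := by
    rw [intervalIntegral.integral_comp_neg]; norm_num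
  have h2 : (∫ y in (0:ℝ)..π, g (-y)) = -∫ y in (0:ℝ)..π, g y := by
    rw [← intervalIntegral.integral_neg]
    congr 1; ext y; exact hodd y
  rw [h2] at h1
  linarith [hsplit]

lemma int_K_zero {f : ℝ → ℝ} (hf : ContDiff ℝ 1 f) (A φ : ℝ) :
    (∫ y in (-π)..π, Real.cos (y+φ) * (-(A * Real.sin (y+φ)) * deriv f (A * Real.cos (y+φ))))
      = 0 := by
  have hc := deriv_cont hf
  set kk : ℝ → ℝ := fun s => Real.cos s * (-(A * Real.sin s) * deriv f (A * Real.cos s)) with hkk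
  have hcont : Continuous kk := by fun_prop
  have hper : Function.Periodic kk (2*π) := by
    intro s; simp only [hkk, Real.sin_add_two_pi, Real.cos_add_two_pi]
  have h1 : (∫ y in (-π)..π, kk (y + φ)) = ∫ y in (-π)..π, kk y := shift_integral hcont hper φ
  have h2 : (∫ y in (-π)..π, kk y) = 0 := by
    apply odd_integral hcont
    intro x; simp only [hkk, Real.cos_neg, Real.sin_neg]; ring
  calc (∫ y in (-π)..π, Real.cos (y+φ) * (-(A * Real.sin (y+φ)) * deriv f (A * Real.cos (y+φ))))
      = ∫ y in (-π)..π, kk (y + φ) := rfl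
    _ = 0 := by rw [h1, h2]

lemma int_sin_eq {f : ℝ → ℝ} (hf : ContDiff ℝ 1 f) {A : ℝ} (hA : 0 < A)
    (hfix : A = ∫ y in (-π)..π, Real.cos y * f (A * Real.cos y)) (φ : ℝ) :
    (∫ y in (-π)..π, Real.sin (y+φ) * (-(A * Real.sin (y+φ)) * deriv f (A * Real.cos (y+φ))))
      = -A := by
  have hc := deriv_cont hf
  set G : ℝ → ℝ := fun s => Real.sin s * (-(A * Real.sin s) * deriv f (A * Real.cos s)) with hG
  have hcont : Continuous G := by fun_prop
  have hper : Function.Periodic G (2*π) := by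
    intro s; simp only [hG, Real.sin_add_two_pi, Real.cos_add_two_pi]
  have h1 : (∫ y in (-π)..π, G (y + φ)) = ∫ y in (-π)..π, G y := shift_integral hcont hper φ
  -- integration by parts : ∫ (cos y * f(A cos y) + sin y * v') = 0
  have hibp : (∫ y in (-π)..π,
      (Real.cos y * f (A * Real.cos y) + Real.sin y * (-(A * Real.sin y) * deriv f (A * Real.cos y))))
      = Real.sin π * f (A * Real.cos π) - Real.sin (-π) * f (A * Real.cos (-π)) := by
    apply intervalIntegral.integral_deriv_mul_eq_sub
    · intro x _; exact Real.hasDerivAt_sin x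
    · intro x _
      have := hasDeriv_inner hf A 0 x
      simpa using this
    · exact (Real.continuous_cos.intervalIntegrable _ _)
    · have : Continuous (fun y => -(A * Real.sin y) * deriv f (A * Real.cos y)) := by fun_prop
      exact this.intervalIntegrable _ _
  rw [Real.sin_pi] at hibp
  have hsnegpi : Real.sin (-π) = 0 := by simp
  rw [hsnegpi] at hibp
  simp only [zero_mul, sub_zero] at hibp
  have hsplit : (∫ y in (-π)..π,
      (Real.cos y * f (A * Real.cos y) + Real.sin y * (-(A * Real.sin y) * deriv f (A * Real.cos y))))
      = (∫ y in (-π)..π, Real.cos y * f (A * Real.cos y)) + ∫ y in (-π)..π, G y := by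
    apply intervalIntegral.integral_add
    · have : Continuous (fun y => Real.cos y * f (A * Real.cos y)) := by
        have := hf.continuous; fun_prop
      exact this.intervalIntegrable _ _
    · exact hcont.intervalIntegrable _ _
  have hGint : (∫ y in (-π)..π, G y) = -A := by
    rw [hsplit] at hibp
    rw [← hfix] at hibp
    linarith
  calc (∫ y in (-π)..π, Real.sin (y+φ) * (-(A * Real.sin (y+φ)) * deriv f (A * Real.cos (y+φ))))
      = ∫ y in (-π)..π, G (y + φ) := rfl
    _ = -A := by rw [h1, hGint]

lemma Lzero (a h : ℝ) : (∫ y in a..(a+h), (a + h - y - h/2)) = 0 := by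
  have h1 : (∫ y in a..(a+h), (a + h - y - h/2))
      = (∫ y in a..(a+h), ((a + h/2) - y)) := by
    congr 1; ext y; ring
  rw [h1, intervalIntegral.integral_sub intervalIntegrable_const
      intervalIntegral.intervalIntegrable_id, intervalIntegral.integral_const, integral_id]
  rw [smul_eq_mul]; ring

lemma sum_Icc_one (g : ℕ → ℝ) (N : ℕ) :
    ∑ i ∈ Finset.Icc 1 N, g i = ∑ k ∈ Finset.range N, g (k+1) := by
  rw [← Finset.Ico_add_one_right_eq_Icc, Finset.sum_Ico_eq_sum_range]
  exact Finset.sum_congr (by norm_num) fun k _ => by rw [Nat.add_comm]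
set_option maxHeartbeats 1000000 in
theorem stmt_15 (f : ℝ → ℝ) (hf : ContDiff ℝ 1 f) (A : ℝ) (hA : 0 < A)
    (hfix : A = ∫ y in (-π)..π, Real.cos y * f (A * Real.cos y)) :
    ∀ ε > (0 : ℝ), ∃ N₀ : ℕ, ∀ N : ℕ, N₀ ≤ N → 1 ≤ N → ∀ φ : ℝ,
      |(∑ i ∈ Finset.Icc 1 N, Real.sin ((2 * π * (i : ℝ) / (N : ℝ) - π) + φ) *
            ∫ y in (2 * π * ((i : ℝ) - 1) / (N : ℝ) - π)..(2 * π * (i : ℝ) / (N : ℝ) - π),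
              (-(A * Real.sin (y + φ))) * deriv f (A * Real.cos (y + φ)))
          + A|
        ≤ ε / (N : ℝ) := by
  intro ε hε
  have hπ : (0:ℝ) < π := Real.pi_pos
  have hc := deriv_cont hf
  obtain ⟨M0, hM0⟩ := (isCompact_Icc (a := -A) (b := A)).exists_bound_of_continuousOn
    hc.continuousOn
  set M : ℝ := max M0 0 with hMdef
  have hM : ∀ u ∈ Set.Icc (-A) A, |deriv f u| ≤ M := fun u hu =>
    (hM0 u hu).trans (le_max_left _ _)
  have hM0' : 0 ≤ M := le_max_right _ _
  set MF : ℝ := A * M with hMFdef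
  have hMF0 : 0 ≤ MF := mul_nonneg hA.le hM0'
  set ε' : ℝ := ε / (4 * π^2) with hε'def
  have hε'pos : 0 < ε' := by positivity
  set k : ℝ → ℝ := fun s => Real.cos s * (-(A * Real.sin s) * deriv f (A * Real.cos s))
    with hkdef
  have hkc : Continuous k := by fun_prop
  have hkper : Function.Periodic k (2*π) := by
    intro s; simp only [hkdef, Real.sin_add_two_pi, Real.cos_add_two_pi]
  obtain ⟨δ, hδ0, hδ⟩ := periodic_uc hkc hkper ε' hε'pos
  refine ⟨max ⌈π/δ⌉₊ ⌈8*π^3*MF/ε⌉₊ + 1, fun N hN₀ hN1 φ => ?_⟩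
  have hNpos : (0:ℝ) < (N:ℝ) := by exact_mod_cast hN1
  have hNδ : π / (N:ℝ) ≤ δ := by
    have h1 : (⌈π/δ⌉₊ : ℝ) ≤ (N:ℝ) := by
      exact_mod_cast le_trans (le_trans (le_max_left _ ⌈8*π^3*MF/ε⌉₊) (Nat.le_succ _)) hN₀
    have h2 : π/δ ≤ (N:ℝ) := (Nat.le_ceil _).trans h1
    rw [div_le_iff₀ hδ0] at h2
    rw [div_le_iff₀ hNpos]
    linarith
  have hNε : 8*π^3*MF ≤ ε * (N:ℝ) := by
    have h1 : (⌈8*π^3*MF/ε⌉₊ : ℝ) ≤ (N:ℝ) := by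
      exact_mod_cast le_trans (le_trans (le_max_right ⌈π/δ⌉₊ _) (Nat.le_succ _)) hN₀
    have h2 : 8*π^3*MF/ε ≤ (N:ℝ) := (Nat.le_ceil _).trans h1
    rw [div_le_iff₀ hε] at h2
    linarith
  -- notation
  set h : ℝ := 2*π/(N:ℝ) with hhdef
  have hhpos : 0 < h := by positivity
  set x : ℕ → ℝ := fun i => 2*π*(i:ℝ)/(N:ℝ) - π with hxdef
  have hx0 : x 0 = -π := by simp [hxdef]
  have hxN : x N = π := by
    simp only [hxdef]
    field_simp
    ring
  have hxstep : ∀ i : ℕ, x (i+1) = x i + h := by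
    intro i
    simp only [hxdef, hhdef]
    push_cast
    field_simp
    ring
  set Fd : ℝ → ℝ := fun y => -(A * Real.sin (y+φ)) * deriv f (A * Real.cos (y+φ)) with hFddef
  have hFdc : Continuous Fd := integrand_cont hf A φ
  have hFdb : ∀ y, |Fd y| ≤ MF := by
    intro y
    have hmem : A * Real.cos (y+φ) ∈ Set.Icc (-A) A := by
      constructor
      · nlinarith [Real.neg_one_le_cos (y+φ)]
      · nlinarith [Real.cos_le_one (y+φ)]
    have h1 : |Fd y| = |A * Real.sin (y+φ)| * |deriv f (A * Real.cos (y+φ))| := by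
      rw [hFddef]; rw [abs_mul, abs_neg]
    have h2 : |A * Real.sin (y+φ)| ≤ A := by
      rw [abs_mul, abs_of_pos hA]
      nlinarith [Real.abs_sin_le_one (y+φ), hA]
    calc |Fd y| = |A * Real.sin (y+φ)| * |deriv f (A * Real.cos (y+φ))| := h1
      _ ≤ A * M := mul_le_mul h2 (hM _ hmem) (abs_nonneg _) hA.le
      _ = MF := rfl
  set K : ℝ → ℝ := fun y => Real.cos (y+φ) * Fd y with hKdef
  have hKk : ∀ y, K y = k (y+φ) := fun y => rfl
  have hKc : Continuous K := by rw [hKdef]; fun_prop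
  -- rewrite the statement's sum
  have hcast : ∀ i ∈ Finset.Icc 1 N, (2 * π * ((i:ℝ) - 1) / (N:ℝ) - π) = x (i-1) := by
    intro i hi
    have hi1 : 1 ≤ i := (Finset.mem_Icc.1 hi).1
    simp only [hxdef]
    rw [Nat.cast_sub hi1]
    norm_num
  have hrw : (∑ i ∈ Finset.Icc 1 N, Real.sin ((2 * π * (i : ℝ) / (N : ℝ) - π) + φ) *
        ∫ y in (2 * π * ((i : ℝ) - 1) / (N : ℝ) - π)..(2 * π * (i : ℝ) / (N : ℝ) - π),
          (-(A * Real.sin (y + φ))) * deriv f (A * Real.cos (y + φ)))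
      = ∑ i ∈ Finset.Icc 1 N, Real.sin (x i + φ) * ∫ y in (x (i-1))..(x i), Fd y := by
    refine Finset.sum_congr rfl fun i hi => ?_
    rw [hcast i hi]
  rw [hrw]
  -- adjacent interval sums
  have hadj : ∀ (g : ℝ → ℝ), Continuous g →
      (∑ i ∈ Finset.Icc 1 N, ∫ y in (x (i-1))..(x i), g y) = ∫ y in (-π)..π, g y := by
    intro g hg
    rw [sum_Icc_one (fun i => ∫ y in (x (i-1))..(x i), g y) N]
    simp only [Nat.add_sub_cancel]
    rw [intervalIntegral.sum_integral_adjacent_intervals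
      (fun i _ => hg.intervalIntegrable _ _)]
    rw [hx0, hxN]
  -- the exact integral identities
  have hsinint : (∑ i ∈ Finset.Icc 1 N, ∫ y in (x (i-1))..(x i), Real.sin (y+φ) * Fd y) = -A := by
    rw [hadj _ (by rw [hFddef]; fun_prop)]
    exact int_sin_eq hf hA hfix φ
  have hKint : (∑ i ∈ Finset.Icc 1 N, ∫ y in (x (i-1))..(x i), K y) = 0 := by
    rw [hadj _ hKc]
    exact int_K_zero hf A φ
  -- express S + A as sum of T i
  have hT : (∑ i ∈ Finset.Icc 1 N, Real.sin (x i + φ) * ∫ y in (x (i-1))..(x i), Fd y) + A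
      = ∑ i ∈ Finset.Icc 1 N,
          ∫ y in (x (i-1))..(x i), (Real.sin (x i + φ) - Real.sin (y+φ)) * Fd y := by
    have hTi : ∀ i, (∫ y in (x (i-1))..(x i), (Real.sin (x i + φ) - Real.sin (y+φ)) * Fd y)
        = Real.sin (x i + φ) * (∫ y in (x (i-1))..(x i), Fd y)
          - ∫ y in (x (i-1))..(x i), Real.sin (y+φ) * Fd y := by
      intro i
      rw [← intervalIntegral.integral_const_mul, ← intervalIntegral.integral_sub
        ((by fun_prop : Continuous fun y => Real.sin (x i + φ) * Fd y).intervalIntegrable _ _)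
        ((by fun_prop : Continuous fun y => Real.sin (y+φ) * Fd y).intervalIntegrable _ _)]
      congr 1; ext y; ring
    rw [Finset.sum_congr rfl (fun i _ => hTi i), Finset.sum_sub_distrib, hsinint]
    ring
  rw [hT]
  -- decompose each T i
  set E : ℕ → ℝ := fun i => ∫ y in (x (i-1))..(x i),
      ((Real.sin (x i + φ) - Real.sin (y+φ)) * Fd y - h/2 * K y
        - k (x i - h/2 + φ) * (x i - y - h/2)) with hEdef
  have hdecomp : ∀ i ∈ Finset.Icc 1 N,
      (∫ y in (x (i-1))..(x i), (Real.sin (x i + φ) - Real.sin (y+φ)) * Fd y)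
        = E i + h/2 * ∫ y in (x (i-1))..(x i), K y := by
    intro i hi
    have hi1 : 1 ≤ i := (Finset.mem_Icc.1 hi).1
    have hxi : x i = x (i-1) + h := by
      have := hxstep (i-1)
      rwa [Nat.sub_add_cancel hi1] at this
    have hcont1 : Continuous fun y => Real.sin (x i + φ) - Real.sin (y+φ) := by fun_prop
    have hintL : (∫ y in (x (i-1))..(x i), (x i - y - h/2)) = 0 := by
      rw [hxi]
      have := Lzero (x (i-1)) h
      convert this using 2
    have hsplit : (∫ y in (x (i-1))..(x i), (Real.sin (x i + φ) - Real.sin (y+φ)) * Fd y)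
        = E i + ∫ y in (x (i-1))..(x i), (h/2 * K y + k (x i - h/2 + φ) * (x i - y - h/2)) := by
      rw [hEdef]
      rw [← intervalIntegral.integral_add]
      · congr 1; ext y; ring
      · apply Continuous.intervalIntegrable
        fun_prop
      · apply Continuous.intervalIntegrable
        fun_prop
    rw [hsplit]
    congr 1
    rw [intervalIntegral.integral_add (by apply Continuous.intervalIntegrable; fun_prop)
      (by apply Continuous.intervalIntegrable; fun_prop),
      intervalIntegral.integral_const_mul, intervalIntegral.integral_const_mul, hintL]
    ring
  rw [Finset.sum_congr rfl hdecomp, Finset.sum_add_distrib, ← Finset.mul_sum, hKint,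
    mul_zero, add_zero]
  clear_value h x Fd K E
  -- bound each E i
  have hEbound : ∀ i ∈ Finset.Icc 1 N, |E i| ≤ h * (h/2*ε' + h^2/2*MF) := by
    intro i hi
    simp only [hEdef]
    have hi1 : 1 ≤ i := (Finset.mem_Icc.1 hi).1
    have hxi : x i = x (i-1) + h := by
      have := hxstep (i-1)
      rwa [Nat.sub_add_cancel hi1] at this
    have hab : x (i-1) ≤ x i := by rw [hxi]; linarith
    have hpt : ∀ y ∈ Set.uIoc (x (i-1)) (x i),
        ‖(Real.sin (x i + φ) - Real.sin (y+φ)) * Fd y - h/2 * K y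
          - k (x i - h/2 + φ) * (x i - y - h/2)‖ ≤ h/2*ε' + h^2/2*MF := by
      intro y hy
      rw [Set.uIoc_of_le hab] at hy
      obtain ⟨hya, hyb⟩ := hy
      have hby0 : 0 ≤ x i - y := by linarith
      have hbyh : x i - y < h := by linarith [hxi]
      have he : (x i + φ) - (y + φ) = x i - y := by ring
      have hr := sin_taylor (a := y+φ) (b := x i+φ) (by linarith)
      rw [he] at hr
      have hrb : |Real.sin (x i + φ) - Real.sin (y+φ) - (x i - y) * Real.cos (y+φ)|
          ≤ h^2/2 := hr.trans (by
            have := pow_le_pow_left₀ hby0 hbyh.le 2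
            linarith)
      have hKd : |K y - k (x i - h/2 + φ)| ≤ ε' := by
        rw [hKk y]
        apply hδ
        have : (y + φ) - (x i - h/2 + φ) = y - x i + h/2 := by ring
        rw [this]
        have h1 : |y - x i + h/2| ≤ h/2 := abs_le.2 ⟨by linarith, by linarith⟩
        have h2 : h/2 = π/(N:ℝ) := by rw [hhdef]; ring
        linarith [hNδ]
      have hL : |x i - y - h/2| ≤ h/2 := abs_le.2 ⟨by linarith, by linarith⟩
      calc ‖(Real.sin (x i + φ) - Real.sin (y+φ)) * Fd y - h/2 * K y
            - k (x i - h/2 + φ) * (x i - y - h/2)‖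
          = |(x i - y - h/2) * (K y - k (x i - h/2 + φ))
              + (Real.sin (x i + φ) - Real.sin (y+φ) - (x i - y) * Real.cos (y+φ)) * Fd y| := by
            rw [Real.norm_eq_abs]; congr 1; simp only [hKdef]; ring
        _ ≤ |x i - y - h/2| * |K y - k (x i - h/2 + φ)|
              + |Real.sin (x i + φ) - Real.sin (y+φ) - (x i - y) * Real.cos (y+φ)| * |Fd y| := by
            refine (abs_add_le _ _).trans ?_
            rw [abs_mul, abs_mul]
        _ ≤ h/2*ε' + h^2/2*MF := add_le_add
            (mul_le_mul hL hKd (abs_nonneg _) (by positivity))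
            (mul_le_mul hrb (hFdb y) (abs_nonneg _) (by positivity))
    have := intervalIntegral.norm_integral_le_of_norm_le_const hpt
    rw [Real.norm_eq_abs] at this
    have habs : |x i - x (i-1)| = h := by rw [hxi]; rw [abs_of_nonneg (by linarith)]; ring
    rw [habs] at this
    exact this.trans (le_of_eq (by ring))
  calc |∑ i ∈ Finset.Icc 1 N, E i|
      ≤ ∑ i ∈ Finset.Icc 1 N, |E i| := Finset.abs_sum_le_sum_abs _ _
    _ ≤ (Finset.Icc 1 N).card • (h * (h/2*ε' + h^2/2*MF)) :=
        Finset.sum_le_card_nsmul _ _ _ hEbound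
    _ = (N:ℝ) * (h * (h/2*ε' + h^2/2*MF)) := by
        rw [Nat.card_Icc, nsmul_eq_mul]
        norm_num
    _ = ε/(2*(N:ℝ)) + 4*π^3*MF/(N:ℝ)^2 := by
        rw [hhdef, hε'def]
        field_simp
        ring
    _ ≤ ε/(N:ℝ) := by
        have h2 : 4*π^3*MF/(N:ℝ)^2 ≤ ε/(2*(N:ℝ)) := by
          rw [div_le_div_iff₀ (by positivity) (by positivity)]
          nlinarith [hNε, hNpos]
        have h3 : ε/(2*(N:ℝ)) + ε/(2*(N:ℝ)) = ε/(N:ℝ) := by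
          field_simp
          ring
        linarith
end

section
/- Let f : ℝ → ℝ be C² and A > 0 with A = ∫_{-π}^{π} cos(y) f(A cos y) dy, and γ = ∫_{-π}^{π} f'(A cos x) dx - 2. Then ∫_{-π}^{π} cos(y) sin(y) f''(A cos y) (-A sin y) dy = -γ. -/
open Real MeasureTheory

theorem stmt_17 (f : ℝ → ℝ) (hf : ContDiff ℝ 2 f) (A : ℝ) (hA : 0 < A)
    (hfix : A = ∫ y in (-π)..π, Real.cos y * f (A * Real.cos y)) :
    (∫ y in (-π)..π,
        Real.cos y * Real.sin y * deriv (deriv f) (A * Real.cos y) * (-(A * Real.sin y))) =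
      -((∫ x in (-π)..π, deriv f (A * Real.cos x)) - 2) := by
  have hf2 : ContDiff ℝ ((1:ℕ)+1) f := by exact_mod_cast hf
  have hdf : Differentiable ℝ f := hf.differentiable (by norm_num)
  have hf1 : ContDiff ℝ 1 (deriv f) := (contDiff_succ_iff_deriv.mp hf2).2.2
  have hdf' : Differentiable ℝ (deriv f) := hf1.differentiable one_ne_zero
  have cf' : Continuous (deriv f) := hdf'.continuous
  have hf0 : ContDiff ℝ ((0:ℕ)+1) (deriv f) := by exact_mod_cast hf1
  have cf'' : Continuous (deriv (deriv f)) :=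
    (contDiff_succ_iff_deriv.mp hf0).2.2.continuous
  have hAc : ∀ y : ℝ, HasDerivAt (fun y => A * Real.cos y) (A * (-Real.sin y)) y :=
    fun y => (Real.hasDerivAt_cos y).const_mul A
  have hu : ∀ y : ℝ, HasDerivAt (fun y => f (A * Real.cos y))
      (deriv f (A * Real.cos y) * (A * (-Real.sin y))) y := fun y =>
    ((hdf (A * Real.cos y)).hasDerivAt).comp y (hAc y)
  have hv : ∀ y : ℝ, HasDerivAt (fun y => deriv f (A * Real.cos y))
      (deriv (deriv f) (A * Real.cos y) * (A * (-Real.sin y))) y := fun y =>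
    by have := ((hdf' (A * Real.cos y)).hasDerivAt).comp y (hAc y); exact this
  have c1 : Continuous fun y => deriv f (A * Real.cos y) :=
    cf'.comp (continuous_const.mul Real.continuous_cos)
  have c2 : Continuous fun y => deriv (deriv f) (A * Real.cos y) :=
    cf''.comp (continuous_const.mul Real.continuous_cos)
  set S : ℝ := ∫ y in (-π)..π, Real.sin y * Real.sin y * deriv f (A * Real.cos y) with hSdef
  -- Step 1: S = 1, from the fixed point equation by integration by parts
  have IBP1 := intervalIntegral.integral_mul_deriv_eq_deriv_mul
    (u := fun y => f (A * Real.cos y)) (v := Real.sin)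
    (u' := fun y => deriv f (A * Real.cos y) * (A * (-Real.sin y)))
    (v' := Real.cos) (a := -π) (b := π)
    (fun x _ => hu x) (fun x _ => Real.hasDerivAt_sin x)
    ((c1.mul (continuous_const.mul Real.continuous_sin.neg)).intervalIntegrable _ _)
    (Real.continuous_cos.intervalIntegrable _ _)
  have e1 : (∫ x in (-π)..π, deriv f (A * Real.cos x) * (A * (-Real.sin x)) * Real.sin x)
      = (-A) * S := by
    rw [hSdef, ← intervalIntegral.integral_const_mul]
    apply intervalIntegral.integral_congr
    intro x _
    ring
  have e2 : (∫ x in (-π)..π, f (A * Real.cos x) * Real.cos x)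
      = ∫ y in (-π)..π, Real.cos y * f (A * Real.cos y) := by
    apply intervalIntegral.integral_congr
    intro x _
    ring
  rw [e1, e2] at IBP1
  have hAS : A = A * S := by
    calc A = ∫ y in (-π)..π, Real.cos y * f (A * Real.cos y) := hfix
    _ = _ := IBP1
    _ = A * S := by simp [Real.sin_pi, Real.sin_neg]
  have hS : S = 1 :=
    (mul_left_cancel₀ hA.ne' (by rw [mul_one]; exact hAS)).symm
  -- Step 2: main integration by parts
  have hu2 : ∀ y : ℝ, HasDerivAt (fun y => Real.cos y * Real.sin y)
      (-Real.sin y * Real.sin y + Real.cos y * Real.cos y) y := fun y =>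
    (Real.hasDerivAt_cos y).mul (Real.hasDerivAt_sin y)
  have IBP2 := intervalIntegral.integral_mul_deriv_eq_deriv_mul
    (u := fun y => Real.cos y * Real.sin y)
    (v := fun y => deriv f (A * Real.cos y))
    (u' := fun y => -Real.sin y * Real.sin y + Real.cos y * Real.cos y)
    (v' := fun y => deriv (deriv f) (A * Real.cos y) * (A * (-Real.sin y)))
    (a := -π) (b := π)
    (fun x _ => hu2 x) (fun x _ => hv x)
    (((Real.continuous_sin.neg.mul Real.continuous_sin).add
      (Real.continuous_cos.mul Real.continuous_cos)).intervalIntegrable _ _)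
    ((c2.mul (continuous_const.mul Real.continuous_sin.neg)).intervalIntegrable _ _)
  beta_reduce at IBP2
  have e3 : (∫ y in (-π)..π,
      Real.cos y * Real.sin y * deriv (deriv f) (A * Real.cos y) * (-(A * Real.sin y)))
      = ∫ x in (-π)..π, Real.cos x * Real.sin x *
        (deriv (deriv f) (A * Real.cos x) * (A * (-Real.sin x))) := by
    apply intervalIntegral.integral_congr
    intro x _
    ring
  have e4 : (∫ x in (-π)..π,
      (-Real.sin x * Real.sin x + Real.cos x * Real.cos x) * deriv f (A * Real.cos x))
      = (∫ x in (-π)..π, deriv f (A * Real.cos x)) - 2 * S := by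
    have hcong : ∀ x, (-Real.sin x * Real.sin x + Real.cos x * Real.cos x) *
        deriv f (A * Real.cos x)
        = deriv f (A * Real.cos x) - 2 * (Real.sin x * Real.sin x * deriv f (A * Real.cos x)) := by
      intro x
      have hc : Real.cos x * Real.cos x = 1 - Real.sin x * Real.sin x := by
        nlinarith [Real.sin_sq_add_cos_sq x]
      rw [hc]; ring
    rw [intervalIntegral.integral_congr (g := fun x =>
      deriv f (A * Real.cos x) - 2 * (Real.sin x * Real.sin x * deriv f (A * Real.cos x)))
      (fun x _ => hcong x)]
    rw [intervalIntegral.integral_sub (c1.intervalIntegrable _ _)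
      ((show Continuous fun x => 2 * (Real.sin x * Real.sin x * deriv f (A * Real.cos x)) from
        continuous_const.mul ((Real.continuous_sin.mul Real.continuous_sin).mul c1)).intervalIntegrable _ _)]
    rw [intervalIntegral.integral_const_mul]
  rw [e3, IBP2, e4, hS]
  simp [Real.sin_pi, Real.sin_neg]
end
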